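/- Let Δ > 0 and 0 < Δ_P ≤ Δ. Then for every real c ≤ 0 and all reals r, r̂ with 0 ≤ r̂ ≤ r < Δ and r − r̂ ≤ Δ_P, the index-rounding error of the ratio table satisfies |Q⁺(c, r) − Q⁺(c, r̂)| ≤ 1 − Q⁺(0, Δ − Δ_P). -/

import Mathlib

/-- Φ⁺(x) = log₂(1 + 2^x) -/
noncomputable def Phip (x : ℝ) : ℝ := Real.logb 2 (1 + (2:ℝ) ^ x)
/-- (Φ⁺)'(x) = 2^x / (2^x + 1) -/
noncomputable def dPhip (x : ℝ) : ℝ := (2:ℝ) ^ x / ((2:ℝ) ^ x + 1)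
/-- First-order Taylor remainder E⁺(i, r) -/
noncomputable def Ep (i r : ℝ) : ℝ := Phip (i - r) - Phip i + r * dPhip i
/-- Error ratio Q⁺(i, r) = E⁺(i, r)/E⁺(i, Δ) -/
noncomputable def Qp (Δ i r : ℝ) : ℝ := Ep i r / Ep i Δ

noncomputable def gg (i t : ℝ) : ℝ := dPhip i - dPhip (i - t)

lemma rp_pos (x : ℝ) : (0:ℝ) < (2:ℝ) ^ x := Real.rpow_pos_of_pos two_pos x

lemma hasDerivAt_phip (x : ℝ) : HasDerivAt Phip (dPhip x) x := by
  have h1 : HasDerivAt (fun x : ℝ => 1 + (2:ℝ) ^ x) ((2:ℝ) ^ x * Real.log 2) x :=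
    ((Real.hasStrictDerivAt_const_rpow two_pos x).hasDerivAt).const_add 1
  have hpos : (0:ℝ) < 1 + (2:ℝ) ^ x := by positivity
  have h2 : HasDerivAt (fun x : ℝ => Real.log (1 + (2:ℝ) ^ x))
      ((2:ℝ) ^ x * Real.log 2 / (1 + (2:ℝ) ^ x)) x := h1.log (ne_of_gt hpos)
  have h3 : HasDerivAt Phip ((2:ℝ) ^ x * Real.log 2 / (1 + (2:ℝ) ^ x) / Real.log 2) x := by
    unfold Phip Real.logb
    exact h2.div_const _
  convert h3 using 1
  have hl2 : Real.log 2 ≠ 0 := by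
    exact Real.log_ne_zero_of_pos_of_ne_one two_pos (by norm_num)
  unfold dPhip
  field_simp
  ring

lemma hasDerivAt_Ep (i r : ℝ) : HasDerivAt (fun r => Ep i r) (gg i r) r := by
  have h1 : HasDerivAt (fun r : ℝ => Phip (i - r)) (-dPhip (i - r)) r := by
    have := (hasDerivAt_phip (i - r)).comp r ((hasDerivAt_id r).const_sub i)
    simpa [Function.comp_def] using this
  have h2 : HasDerivAt (fun r : ℝ => Phip (i - r) - Phip i + r * dPhip i)
      (-dPhip (i - r) - 0 + dPhip i) r :=
    ((h1.sub_const _).add (((hasDerivAt_id r).mul_const (dPhip i)).congr_deriv (by ring))).congr_deriv (by ring)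
  unfold Ep gg
  convert h2 using 1
  ring

lemma cont_dPhip : Continuous dPhip := by
  unfold dPhip
  have hc : Continuous fun x : ℝ => (2:ℝ) ^ x :=
    continuous_iff_continuousAt.mpr fun x => Real.continuousAt_const_rpow (by norm_num)
  apply hc.div (hc.add continuous_const)
  intro x
  have := rp_pos x
  exact ne_of_gt (by show (0:ℝ) < (2:ℝ)^x + 1; linarith)

lemma cont_gg (i : ℝ) : Continuous (gg i) :=
  continuous_const.sub (cont_dPhip.comp (continuous_const.sub continuous_id))

lemma dPhip_mono : Monotone dPhip := by
  intro a b hab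
  unfold dPhip
  have ha := rp_pos a
  have hb := rp_pos b
  have h : (2:ℝ) ^ a ≤ (2:ℝ) ^ b := Real.rpow_le_rpow_left_iff (by norm_num) |>.mpr hab
  rw [div_le_div_iff₀ (by positivity) (by positivity)]
  nlinarith

lemma gg_mono (i : ℝ) : Monotone (gg i) := by
  intro a b hab
  unfold gg
  have := dPhip_mono (show i - b ≤ i - a by linarith)
  linarith

lemma gg_nonneg (i : ℝ) {t : ℝ} (ht : 0 ≤ t) : 0 ≤ gg i t := by
  have h := dPhip_mono (show i - t ≤ i by linarith)
  unfold gg; linarith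

lemma gg_pos (i : ℝ) {t : ℝ} (ht : 0 < t) : 0 < gg i t := by
  unfold gg
  have h : (2:ℝ) ^ (i - t) < (2:ℝ) ^ i := by
    apply Real.rpow_lt_rpow_left_iff (x := (2:ℝ)) (by norm_num) |>.mpr; linarith
  unfold dPhip
  have ha := rp_pos (i - t)
  have hb := rp_pos i
  rw [sub_pos, div_lt_div_iff₀ (by positivity) (by positivity)]
  nlinarith

lemma Ep_eq_integral (i s : ℝ) : Ep i s = ∫ t in (0:ℝ)..s, gg i t := by
  have := intervalIntegral.integral_eq_sub_of_hasDerivAt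
    (f := fun r => Ep i r) (f' := gg i) (a := 0) (b := s)
    (fun t _ => hasDerivAt_Ep i t) ((cont_gg i).intervalIntegrable 0 s)
  have h0 : Ep i 0 = 0 := by unfold Ep; simp
  rw [this, h0, sub_zero]

lemma Ep_sub_eq (i a b : ℝ) : Ep i b - Ep i a = ∫ t in a..b, gg i t := by
  rw [Ep_eq_integral i a, Ep_eq_integral i b,
    ← intervalIntegral.integral_add_adjacent_intervals
      ((cont_gg i).intervalIntegrable 0 a) ((cont_gg i).intervalIntegrable a b)]
  ring

lemma cross_alg {u x x' : ℝ} (hu0 : 0 < u) (hu1 : u ≤ 1) (hx'0 : 0 < x')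
    (hxx : x' ≤ x) (hx1 : x ≤ 1) :
    (1/2 - x/(x+1)) * (u/(u+1) - u*x'/(u*x'+1)) ≤
      (u/(u+1) - u*x/(u*x+1)) * (1/2 - x'/(x'+1)) := by
  have hx0 : 0 < x := lt_of_lt_of_le hx'0 hxx
  have h1 : (0:ℝ) < x + 1 := by linarith
  have h2 : (0:ℝ) < x' + 1 := by linarith
  have h3 : (0:ℝ) < u*x + 1 := by nlinarith
  have h4 : (0:ℝ) < u*x' + 1 := by nlinarith
  have h5 : (0:ℝ) < u + 1 := by linarith
  rw [← sub_nonneg]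
  have key : (u/(u+1) - u*x/(u*x+1)) * (1/2 - x'/(x'+1)) -
      (1/2 - x/(x+1)) * (u/(u+1) - u*x'/(u*x'+1)) =
      u*(1-x)*(1-x')*(x-x')*(1-u) /
        (2*(u+1)*(x+1)*(x'+1)*(u*x+1)*(u*x'+1)) := by
    field_simp
    ring
  rw [key]
  have hnum : 0 ≤ u*(1-x)*(1-x')*(x-x')*(1-u) := by
    have : (0:ℝ) ≤ 1 - x := by linarith
    have : (0:ℝ) ≤ 1 - x' := by linarith
    have : (0:ℝ) ≤ x - x' := by linarith
    have : (0:ℝ) ≤ 1 - u := by linarith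
    positivity
  positivity

lemma gg_cross {c t t' : ℝ} (hc : c ≤ 0) (ht : 0 ≤ t) (htt : t ≤ t') :
    gg 0 t * gg c t' ≤ gg c t * gg 0 t' := by
  have e1 : ∀ a b : ℝ, (2:ℝ) ^ (a - b) = (2:ℝ) ^ a * (2:ℝ) ^ (0 - b) := by
    intro a b
    rw [zero_sub, ← Real.rpow_add two_pos]
    ring_nf
  have hu1 : (2:ℝ) ^ c ≤ 1 := Real.rpow_le_one_of_one_le_of_nonpos (by norm_num) hc
  have hx1 : (2:ℝ) ^ (0 - t) ≤ 1 :=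
    Real.rpow_le_one_of_one_le_of_nonpos (by norm_num) (by linarith)
  have hxx : (2:ℝ) ^ (0 - t') ≤ (2:ℝ) ^ (0 - t) :=
    Real.rpow_le_rpow_left_iff (by norm_num) |>.mpr (by linarith)
  have h := cross_alg (u := (2:ℝ)^c) (x := (2:ℝ)^(0-t)) (x' := (2:ℝ)^(0-t'))
    (rp_pos c) hu1 (rp_pos _) hxx hx1
  unfold gg dPhip
  rw [e1 c t, e1 c t']
  norm_num [Real.rpow_zero]
  convert h using 2 <;> ring

lemma Ep_pos {i Δ : ℝ} (hΔ : 0 < Δ) : 0 < Ep i Δ := by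
  rw [Ep_eq_integral]
  exact intervalIntegral.intervalIntegral_pos_of_pos_on ((cont_gg i).intervalIntegrable 0 Δ)
    (fun t ht => gg_pos i ht.1) hΔ

lemma Ep_mono {i a b : ℝ} (ha : 0 ≤ a) (hab : a ≤ b) : Ep i a ≤ Ep i b := by
  rw [← sub_nonneg, Ep_sub_eq]
  apply intervalIntegral.integral_nonneg hab
  intro t ht
  exact gg_nonneg i (le_trans ha ht.1)

lemma crux {c s Δ : ℝ} (hc : c ≤ 0) (hs0 : 0 ≤ s) (hsΔ : s ≤ Δ) :
    Ep 0 s * Ep c Δ ≤ Ep c s * Ep 0 Δ := by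
  set Ic := ∫ t' in s..Δ, gg c t' with hIc
  set I0 := ∫ t' in s..Δ, gg 0 t' with hI0
  have hEc : Ep c Δ = Ep c s + Ic := by rw [hIc, ← Ep_sub_eq]; ring
  have hE0 : Ep 0 Δ = Ep 0 s + I0 := by rw [hI0, ← Ep_sub_eq]; ring
  have pt : ∀ t ∈ Set.Icc (0:ℝ) s, gg 0 t * Ic ≤ gg c t * I0 := by
    intro t ht
    rw [hIc, hI0, ← intervalIntegral.integral_const_mul, ← intervalIntegral.integral_const_mul]
    apply intervalIntegral.integral_mono_on hsΔ
      ((continuous_const.mul (cont_gg c)).intervalIntegrable s Δ)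
      ((continuous_const.mul (cont_gg 0)).intervalIntegrable s Δ)
    intro t' ht'
    exact gg_cross hc ht.1 (le_trans ht.2 ht'.1)
  have h1 : ∫ t in (0:ℝ)..s, gg 0 t * Ic ≤ ∫ t in (0:ℝ)..s, gg c t * I0 :=
    intervalIntegral.integral_mono_on hs0
      (((cont_gg 0).mul continuous_const).intervalIntegrable 0 s)
      (((cont_gg c).mul continuous_const).intervalIntegrable 0 s) pt
  rw [intervalIntegral.integral_mul_const, intervalIntegral.integral_mul_const,
    ← Ep_eq_integral, ← Ep_eq_integral] at h1
  rw [hEc, hE0]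
  nlinarith [h1]

lemma shift {c rhat r Δ : ℝ} (hrr : rhat ≤ r) (hrΔ : r ≤ Δ) :
    Ep c r - Ep c rhat ≤ Ep c Δ - Ep c (Δ - (r - rhat)) := by
  rw [Ep_sub_eq, Ep_sub_eq]
  have hsub : ∫ t in (Δ - (r - rhat))..Δ, gg c (t - (Δ - r)) = ∫ t in rhat..r, gg c t := by
    rw [intervalIntegral.integral_comp_sub_right (gg c) (Δ - r)]
    norm_num
  rw [← hsub]
  apply intervalIntegral.integral_mono_on (by linarith)
    (((cont_gg c).comp (continuous_id.sub continuous_const)).intervalIntegrable _ _)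
    ((cont_gg c).intervalIntegrable _ _)
  intro t _
  exact gg_mono c (by show t - (Δ - r) ≤ t; linarith)

theorem stmt_10 (Δ ΔP : ℝ) (hΔ : 0 < Δ) (hΔP : 0 < ΔP) (hΔPΔ : ΔP ≤ Δ) :
    ∀ c r rhat : ℝ, c ≤ 0 → 0 ≤ rhat → rhat ≤ r → r < Δ → r - rhat ≤ ΔP →
      |Qp Δ c r - Qp Δ c rhat| ≤ 1 - Qp Δ 0 (Δ - ΔP) := by
  intro c r rhat hc hr0 hrr hrΔ hd
  have hEcΔ : 0 < Ep c Δ := Ep_pos hΔ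
  have hE0Δ : 0 < Ep 0 Δ := Ep_pos hΔ
  have hmono : Ep c rhat ≤ Ep c r := Ep_mono hr0 hrr
  have h2 : Ep c (Δ - ΔP) ≤ Ep c (Δ - (r - rhat)) := Ep_mono (by linarith) (by linarith)
  have hA : Ep c r - Ep c rhat ≤ Ep c Δ - Ep c (Δ - ΔP) := by
    have := shift (c := c) hrr (le_of_lt hrΔ)
    linarith
  have hcrux : Ep 0 (Δ - ΔP) * Ep c Δ ≤ Ep c (Δ - ΔP) * Ep 0 Δ :=
    crux hc (by linarith) (by linarith)
  unfold Qp
  rw [div_sub_div_same, abs_of_nonneg (div_nonneg (by linarith) hEcΔ.le)]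
  have step1 : (Ep c r - Ep c rhat) / Ep c Δ ≤ (Ep c Δ - Ep c (Δ - ΔP)) / Ep c Δ := by
    gcongr
  have step2 : (Ep c Δ - Ep c (Δ - ΔP)) / Ep c Δ = 1 - Ep c (Δ - ΔP) / Ep c Δ := by
    field_simp
  have step3 : Ep 0 (Δ - ΔP) / Ep 0 Δ ≤ Ep c (Δ - ΔP) / Ep c Δ := by
    rw [div_le_div_iff₀ hE0Δ hEcΔ]
    exact hcrux
  linarith
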